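/- Let ν > -1, κ ∈ [0, 2(ν+1)), 𝔞 = ν - κ/2, 𝔟 = ν - κ. Define G_k(x) = (d/dx){L_{k+1}^{2𝔞}(x) - ((k+2𝔞)/k) L_{k-1}^{2𝔞}(x)} for k ∈ ℕ. Then for every ℓ ∈ ℕ_0, G_{2ℓ+1}(x) = Σ_{j=0}^{2ℓ+1} α_{2ℓ+1, j} L_j^ν(x), where α_{2ℓ+1,j} = ((2ℓ+1+2𝔞)/(2ℓ+1)) C(2ℓ-1-j+𝔟, 2ℓ-1-j) - C(2ℓ+1-j+𝔟, 2ℓ+1-j). -/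

import Mathlib

open Filter Real MeasureTheory

/-- Generalized binomial coefficient `C(x, m) = x(x-1)⋯(x-m+1)/m!` for `m ∈ ℕ₀`, `0` for `m < 0`. -/
noncomputable def gchoose (x : ℝ) (m : ℤ) : ℝ :=
  if 0 ≤ m then (∏ i ∈ Finset.range m.toNat, (x - (i : ℝ))) / (Nat.factorial m.toNat : ℝ) else 0

/-- Generalized Laguerre polynomial `L_j^α(x) = Σ_{ℓ=0}^j ((-1)^ℓ/ℓ!) C(j+α, j-ℓ) x^ℓ`. -/
noncomputable def lagL (j : ℕ) (α : ℝ) : ℝ → ℝ :=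
  fun x => ∑ l ∈ Finset.range (j + 1),
    ((-1 : ℝ) ^ l / (Nat.factorial l : ℝ)) * gchoose ((j : ℝ) + α) ((j : ℤ) - l) * x ^ l

lemma gchoose_neg (x : ℝ) {m : ℤ} (h : m < 0) : gchoose x m = 0 := by
  simp [gchoose, not_le.mpr h]

lemma gchoose_natCast (x : ℝ) (n : ℕ) :
    gchoose x n = (∏ i ∈ Finset.range n, (x - (i : ℝ))) / (Nat.factorial n : ℝ) := by
  simp [gchoose]

lemma descPochhammer_smeval_real (x : ℝ) (n : ℕ) :
    (descPochhammer ℤ n).smeval x = ∏ i ∈ Finset.range n, (x - (i : ℝ)) := by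
  induction n with
  | zero => simp [descPochhammer_zero, Polynomial.smeval_one]
  | succ n ih =>
      rw [descPochhammer_succ_right, Polynomial.smeval_mul, ih, Finset.prod_range_succ,
        Polynomial.smeval_sub, Polynomial.smeval_X, Polynomial.smeval_natCast]
      ring

lemma gchoose_eq_choose (x : ℝ) (n : ℕ) : gchoose x n = Ring.choose x n := by
  have h := Ring.descPochhammer_eq_factorial_smul_choose (R := ℝ) x n
  rw [descPochhammer_smeval_real, nsmul_eq_mul] at h
  rw [gchoose_natCast, h,
    mul_div_cancel_left₀ _ (Nat.cast_ne_zero.mpr (Nat.factorial_ne_zero n))]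

lemma gchoose_reflect (x : ℝ) (n : ℕ) :
    gchoose x n = (-1) ^ n * gchoose ((n : ℝ) - 1 - x) n := by
  rw [gchoose_natCast, gchoose_natCast, ← mul_div_assoc]
  congr 1
  rw [← Finset.prod_range_reflect (fun i => ((n:ℝ) - 1 - x) - i) n]
  have h : ∀ j ∈ Finset.range n, ((n:ℝ) - 1 - x - ((n - 1 - j : ℕ) : ℝ)) = -(x - j) := by
    intro j hj
    have hj' : j < n := Finset.mem_range.mp hj
    push_cast [Nat.cast_sub (by omega : 1 + j ≤ n), Nat.sub_sub]
    ring
  rw [Finset.prod_congr rfl h]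
  have h2 : ∏ j ∈ Finset.range n, -(x - (j:ℝ)) = (-1)^n * ∏ j ∈ Finset.range n, (x - (j:ℝ)) := by
    rw [show ((-1:ℝ))^n = ∏ _j ∈ Finset.range n, (-1:ℝ) by simp, ← Finset.prod_mul_distrib]
    simp [neg_one_mul]
  rw [h2, ← mul_assoc, ← pow_add, Even.neg_one_pow ⟨n, rfl⟩, one_mul]

lemma gchoose_vandermonde (a b : ℝ) (n : ℕ) :
    ∑ ij ∈ Finset.HasAntidiagonal.antidiagonal n, gchoose (a + ij.1) ij.1 * gchoose (b + ij.2) ij.2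
      = gchoose (a + b + n + 1) n := by
  have key := Ring.add_choose_eq (R := ℝ) (r := -a - 1) (s := -b - 1) n (Commute.all _ _)
  have h1 : ∀ (c : ℝ) (k : ℕ), gchoose (c + k) k = (-1) ^ k * Ring.choose (-c - 1) k := by
    intro c k
    rw [gchoose_reflect, gchoose_eq_choose]
    ring_nf
  calc ∑ ij ∈ Finset.HasAntidiagonal.antidiagonal n, gchoose (a + ij.1) ij.1 * gchoose (b + ij.2) ij.2
      = ∑ ij ∈ Finset.HasAntidiagonal.antidiagonal n,
          (-1)^n * (Ring.choose (-a-1) ij.1 * Ring.choose (-b-1) ij.2) := by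
        apply Finset.sum_congr rfl
        intro ij hij
        rw [h1, h1]
        rw [show ((-1:ℝ))^ij.1 * Ring.choose (-a-1) ij.1 * ((-1)^ij.2 * Ring.choose (-b-1) ij.2)
          = (-1)^(ij.1+ij.2) * (Ring.choose (-a-1) ij.1 * Ring.choose (-b-1) ij.2) by
            rw [pow_add]; ring, Finset.HasAntidiagonal.mem_antidiagonal.mp hij]
    _ = (-1)^n * Ring.choose (-a - 1 + (-b - 1)) n := by rw [← Finset.mul_sum, ← key]
    _ = gchoose (a + b + n + 1) n := by
        rw [gchoose_reflect (a+b+n+1) n, gchoose_eq_choose]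
        ring_nf


lemma hasDerivAt_lagL_zero (α : ℝ) (x : ℝ) : HasDerivAt (lagL 0 α) 0 x := by
  have : lagL 0 α = fun _ : ℝ => (1/(Nat.factorial 0 : ℝ)) * gchoose ((0:ℝ)+α) 0 * 1 := by
    funext y; simp [lagL]
  rw [this]
  exact hasDerivAt_const x _

lemma hasDerivAt_lagL_succ (n : ℕ) (α : ℝ) (x : ℝ) :
    HasDerivAt (lagL (n+1) α) (-(lagL n (α+1) x)) x := by
  have h : HasDerivAt (lagL (n+1) α)
      (∑ l ∈ Finset.range (n+2),
        ((-1 : ℝ) ^ l / (Nat.factorial l : ℝ)) * gchoose ((n+1 : ℕ) + α) (((n:ℤ)+1) - l)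
          * ((l : ℝ) * x ^ (l - 1))) x := by
    apply HasDerivAt.fun_sum
    intro l _
    exact (hasDerivAt_pow l x).const_mul _
  convert h using 1
  rw [Finset.sum_range_succ']
  simp only [Nat.cast_zero, zero_mul, mul_zero, add_zero]
  rw [lagL, ← Finset.sum_neg_distrib]
  apply Finset.sum_congr rfl
  intro i _
  have harg : ((n:ℝ) + 1 + α) = (n : ℝ) + (α + 1) := by ring
  have harg2 : ((n:ℤ) + 1 - ((i:ℤ) + 1)) = (n : ℤ) - i := by ring
  have hfac : ((Nat.factorial (i+1) : ℝ)) = (i+1) * Nat.factorial i := by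
    rw [Nat.factorial_succ]; push_cast; ring
  have hne : (Nat.factorial i : ℝ) ≠ 0 := Nat.cast_ne_zero.mpr (Nat.factorial_ne_zero i)
  push_cast [hfac]
  rw [show ((n:ℝ)+1+α) = (n:ℝ)+(α+1) by ring, show ((n:ℤ)+1-((i:ℤ)+1)) = (n:ℤ)-i by ring]
  field_simp
  ring

lemma vand_shift (vr b : ℝ) (n m : ℕ) (hm : m ≤ n) :
    ∑ j ∈ Finset.range (n+1),
        gchoose ((n:ℝ) - j + b) ((n:ℤ) - j) * gchoose ((j:ℝ) + vr) ((j:ℤ) - m)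
      = gchoose ((n:ℝ) + vr + b + 1) ((n:ℤ) - m) := by
  have hsub : Finset.Ico m (n+1) ⊆ Finset.range (n+1) := by
    rw [Finset.range_eq_Ico]; exact Finset.Ico_subset_Ico (Nat.zero_le m) le_rfl
  rw [← Finset.sum_subset hsub (by
    intro j hj hj'
    have : j < m := by
      simp only [Finset.mem_range] at hj
      simp only [Finset.mem_Ico, not_and, not_le] at hj'
      omega
    rw [gchoose_neg _ (by omega : (j:ℤ) - m < 0), mul_zero])]
  rw [Finset.sum_Ico_eq_sum_range]
  have hN : n + 1 - m = (n - m) + 1 := by omega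
  rw [hN]
  have key := gchoose_vandermonde (vr + m) b (n - m)
  rw [Finset.Nat.sum_antidiagonal_eq_sum_range_succ_mk] at key
  have hcongr : ∀ i ∈ Finset.range ((n-m)+1),
      gchoose ((n:ℝ) - ((m+i:ℕ):ℝ) + b) ((n:ℤ) - ((m+i:ℕ):ℤ)) * gchoose (((m+i:ℕ):ℝ) + vr) (((m+i:ℕ):ℤ) - m)
        = gchoose ((vr + m) + i) i * gchoose (b + ((n-m) - i : ℕ)) (((n-m) - i : ℕ)) := by
    intro i hi
    have hi' : i ≤ n - m := by simpa [Nat.lt_succ_iff] using hi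
    have e1 : ((n:ℝ) - ((m+i:ℕ):ℝ) + b) = b + ((n-m) - i : ℕ) := by
      push_cast [Nat.cast_sub (by omega : i ≤ n - m), Nat.cast_sub hm]; ring
    have e2 : ((n:ℤ) - ((m+i:ℕ):ℤ)) = (((n-m) - i : ℕ) : ℤ) := by
      push_cast [Nat.cast_sub (by omega : i ≤ n - m), Nat.cast_sub hm]; ring
    have e3 : (((m+i:ℕ):ℝ) + vr) = (vr + m) + i := by push_cast; ring
    have e4 : (((m+i:ℕ):ℤ) - m) = (i:ℤ) := by push_cast; ring
    rw [e1, e2, e3, e4, mul_comm]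
  rw [Finset.sum_congr rfl hcongr,
    show gchoose ((n:ℝ) + vr + b + 1) ((n:ℤ) - m)
        = gchoose (vr + (m:ℝ) + b + ((n-m:ℕ):ℝ) + 1) ((n-m:ℕ):ℤ) by
      congr 1
      · push_cast [Nat.cast_sub hm]; ring
      · push_cast [Nat.cast_sub hm]; ring]
  exact key

lemma connection (vr b : ℝ) (n : ℕ) (x : ℝ) :
    ∑ j ∈ Finset.range (n+1), gchoose ((n:ℝ) - j + b) ((n:ℤ) - j) * lagL j vr x
      = lagL n (vr + b + 1) x := by
  have hext : ∀ j ∈ Finset.range (n+1), lagL j vr x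
      = ∑ m ∈ Finset.range (n+1),
          ((-1 : ℝ) ^ m / (Nat.factorial m : ℝ)) * gchoose ((j : ℝ) + vr) ((j : ℤ) - m) * x ^ m := by
    intro j hj
    have hj' : j + 1 ≤ n + 1 := by simpa [Nat.lt_succ_iff] using hj
    rw [lagL]
    apply Finset.sum_subset (Finset.range_subset_range.mpr hj')
    intro m _ hm
    have : j < m := by simp only [Finset.mem_range, not_lt] at hm; omega
    rw [gchoose_neg _ (by omega : (j:ℤ) - m < 0)]
    ring
  calc ∑ j ∈ Finset.range (n+1), gchoose ((n:ℝ) - j + b) ((n:ℤ) - j) * lagL j vr x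
      = ∑ j ∈ Finset.range (n+1), ∑ m ∈ Finset.range (n+1),
          gchoose ((n:ℝ) - j + b) ((n:ℤ) - j) *
            (((-1 : ℝ) ^ m / (Nat.factorial m : ℝ)) * gchoose ((j : ℝ) + vr) ((j : ℤ) - m) * x ^ m) := by
        apply Finset.sum_congr rfl
        intro j hj
        rw [hext j hj, Finset.mul_sum]
    _ = ∑ m ∈ Finset.range (n+1), ((-1 : ℝ) ^ m / (Nat.factorial m : ℝ)) * x ^ m *
          ∑ j ∈ Finset.range (n+1),
            gchoose ((n:ℝ) - j + b) ((n:ℤ) - j) * gchoose ((j : ℝ) + vr) ((j : ℤ) - m) := by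
        rw [Finset.sum_comm]
        apply Finset.sum_congr rfl
        intro m _
        rw [Finset.mul_sum]
        apply Finset.sum_congr rfl
        intro j _
        ring
    _ = lagL n (vr + b + 1) x := by
        rw [lagL]
        apply Finset.sum_congr rfl
        intro m hm
        have hm' : m ≤ n := by simpa [Nat.lt_succ_iff] using hm
        rw [vand_shift vr b n m hm', show (n:ℝ) + vr + b + 1 = (n:ℝ) + (vr + b + 1) by ring]
        ring

lemma Gexp (vr b c x : ℝ) (n : ℕ) :
    deriv (fun y => lagL (n+2) (vr + b) y - c * lagL n (vr + b) y) x
      = ∑ j ∈ Finset.range (n+2),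
          (c * gchoose ((n:ℝ) - 1 - j + b) ((n:ℤ) - 1 - j)
            - gchoose ((n:ℝ) + 1 - j + b) ((n:ℤ) + 1 - j)) * lagL j vr x := by
  have hB : ∑ j ∈ Finset.range (n+2),
      gchoose ((n:ℝ) + 1 - j + b) ((n:ℤ) + 1 - j) * lagL j vr x
        = lagL (n+1) (vr + b + 1) x := by
    rw [← connection vr b (n+1) x]
    apply Finset.sum_congr rfl
    intro j _
    congr 2 <;> (push_cast; ring)
  have hsplit : ∑ j ∈ Finset.range (n+2),
      (c * gchoose ((n:ℝ) - 1 - j + b) ((n:ℤ) - 1 - j)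
        - gchoose ((n:ℝ) + 1 - j + b) ((n:ℤ) + 1 - j)) * lagL j vr x
      = c * (∑ j ∈ Finset.range (n+2),
          gchoose ((n:ℝ) - 1 - j + b) ((n:ℤ) - 1 - j) * lagL j vr x)
        - lagL (n+1) (vr + b + 1) x := by
    rw [← hB, Finset.mul_sum, ← Finset.sum_sub_distrib]
    apply Finset.sum_congr rfl
    intro j _
    ring
  rw [hsplit]
  match n with
  | 0 =>
    have hd := ((hasDerivAt_lagL_succ 1 (vr + b) x).sub
      ((hasDerivAt_lagL_zero (vr + b) x).const_mul c)).deriv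
    rw [show deriv (fun y => lagL (0 + 2) (vr + b) y - c * lagL 0 (vr + b) y) x = _ from hd]
    have hA : ∑ j ∈ Finset.range 2,
        gchoose (((0:ℕ):ℝ) - 1 - j + b) (((0:ℕ):ℤ) - 1 - j) * lagL j vr x = 0 := by
      apply Finset.sum_eq_zero
      intro j hj
      rw [gchoose_neg _ (by push_cast; omega : ((0:ℕ):ℤ) - 1 - (j:ℤ) < 0), zero_mul]
    rw [hA]
    ring
  | (m+1) =>
    have hd := ((hasDerivAt_lagL_succ (m+2) (vr + b) x).sub
      ((hasDerivAt_lagL_succ m (vr + b) x).const_mul c)).deriv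
    rw [show deriv (fun y => lagL (m + 1 + 2) (vr + b) y - c * lagL (m + 1) (vr + b) y) x = _ from hd]
    have hA : ∑ j ∈ Finset.range (m+3),
        gchoose (((m+1:ℕ):ℝ) - 1 - j + b) (((m+1:ℕ):ℤ) - 1 - j) * lagL j vr x
          = lagL m (vr + b + 1) x := by
      rw [← connection vr b m x]
      rw [← Finset.sum_subset (Finset.range_subset_range.mpr (by omega : m + 1 ≤ m + 3)) (by
        intro j hj hj'
        have : m < j := by
          simp only [Finset.mem_range] at hj
          simp only [Finset.mem_range, not_lt] at hj'
          omega
        rw [gchoose_neg _ (by push_cast; omega : ((m+1:ℕ):ℤ) - 1 - (j:ℤ) < 0), zero_mul])]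
      apply Finset.sum_congr rfl
      intro j _
      congr 2 <;> (push_cast; ring)
    rw [hA]
    ring

theorem G_odd_expansion (ν κ : ℝ) (hν : -1 < ν) (hκ0 : 0 ≤ κ) (hκ1 : κ < 2 * (ν + 1))
    (l : ℕ) (x : ℝ) :
    deriv (fun y : ℝ =>
        lagL (2 * l + 2) (2 * (ν - κ / 2)) y
          - ((2 * (l : ℝ) + 1 + 2 * (ν - κ / 2)) / (2 * (l : ℝ) + 1))
              * lagL (2 * l) (2 * (ν - κ / 2)) y) x
      = ∑ j ∈ Finset.range (2 * l + 2),
          (((2 * (l : ℝ) + 1 + 2 * (ν - κ / 2)) / (2 * (l : ℝ) + 1))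
              * gchoose (2 * (l : ℝ) - 1 - (j : ℝ) + (ν - κ)) (2 * (l : ℤ) - 1 - (j : ℤ))
            - gchoose (2 * (l : ℝ) + 1 - (j : ℝ) + (ν - κ)) (2 * (l : ℤ) + 1 - (j : ℤ)))
            * lagL j ν x := by
  rw [show 2 * (ν - κ / 2) = ν + (ν - κ) by ring]
  rw [Gexp ν (ν - κ) ((2 * (l : ℝ) + 1 + (ν + (ν - κ))) / (2 * (l : ℝ) + 1)) x (2 * l)]
  apply Finset.sum_congr rfl
  intro j _
  congr 3 <;> (push_cast; ring)
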